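/- Let S be an F-semigroup (i.e., S \ Ss₀ is finite for every s₀ ∈ S) acting continuously on a perfect topological space X. If the system is point transitive (there exists x with dense orbit Sx), then it is topologically transitive: for all nonempty open U, V ⊆ X there exists s ∈ S with s⁻¹U ∩ V ≠ ∅. -/

import Mathlib

/-- For an F-semigroup acting on a perfect space, point transitivity
implies topological transitivity. -/
theorem stmt_1 {S X : Type*} [TopologicalSpace S] [Semigroup S]
    [TopologicalSpace X] [T2Space X] [SMul S X]
    (hact : ∀ (s t : S) (x : X), (s * t) • x = s • t • x)
    (hcont : Continuous fun p : S × X => p.1 • p.2)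
    (hF : ∀ s₀ : S, Set.Finite {s : S | ¬ ∃ t : S, t * s₀ = s})
    (hperf : ∀ x : X, (nhdsWithin x {x}ᶜ).NeBot)
    (x : X) (hx : Dense {y : X | ∃ s : S, s • x = y}) :
    ∀ U V : Set X, IsOpen U → U.Nonempty → IsOpen V → V.Nonempty →
      ∃ s : S, ((fun y : X => s • y) ⁻¹' U ∩ V).Nonempty := by
  intro U V hU hUne hV hVne
  -- find an orbit point in V
  obtain ⟨v, ⟨t, htv⟩, hvV⟩ := hx.exists_mem_open hV hVne
  -- the orbit points in U form an infinite set
  have hinf : {y ∈ U | ∃ s : S, s • x = y}.Infinite := by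
    intro hfin
    obtain ⟨p, hporb, hpU⟩ := hx.exists_mem_open hU hUne
    have hpP : p ∈ {y ∈ U | ∃ s : S, s • x = y} := ⟨hpU, hporb⟩
    have hclosed : IsClosed ({y ∈ U | ∃ s : S, s • x = y} \ {p}) :=
      (hfin.diff (t := {p})).isClosed
    have hWopen : IsOpen (U \ ({y ∈ U | ∃ s : S, s • x = y} \ {p})) :=
      hU.sdiff hclosed
    have hpW : p ∈ U \ ({y ∈ U | ∃ s : S, s • x = y} \ {p}) :=
      ⟨hpU, fun h => h.2 rfl⟩
    have h1 : U \ ({y ∈ U | ∃ s : S, s • x = y} \ {p}) ∈ nhdsWithin p {p}ᶜ :=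
      nhdsWithin_le_nhds (hWopen.mem_nhds hpW)
    have h2 : ({p}ᶜ : Set X) ∈ nhdsWithin p {p}ᶜ := self_mem_nhdsWithin
    haveI := hperf p
    obtain ⟨q, hqW, hqp⟩ := Filter.nonempty_of_mem (Filter.inter_mem h1 h2)
    have hqP : q ∉ {y ∈ U | ∃ s : S, s • x = y} := fun hq =>
      hqW.2 ⟨hq, hqp⟩
    have hopen : IsOpen (U \ {y ∈ U | ∃ s : S, s • x = y}) :=
      hU.sdiff hfin.isClosed
    obtain ⟨w, hworb, hwU⟩ := hx.exists_mem_open hopen ⟨q, hqW.1, hqP⟩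
    exact hwU.2 ⟨hwU.1, hworb⟩
  -- hence the set of semigroup elements mapping x into U is infinite
  have hAinf : {s : S | s • x ∈ U}.Infinite := by
    intro hAfin
    apply hinf
    apply Set.Finite.subset (hAfin.image (fun s => s • x))
    rintro y ⟨hyU, s, rfl⟩
    exact ⟨s, hyU, rfl⟩
  obtain ⟨s, hsA, hsF⟩ := (hAinf.diff (hF t)).nonempty
  have : ∃ r : S, r * t = s := by
    by_contra h
    exact hsF h
  obtain ⟨r, hr⟩ := this
  refine ⟨r, t • x, ?_, htv ▸ hvV⟩
  show r • t • x ∈ U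
  rw [← hact, hr]
  exact hsA
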